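/- Let L be a finite set of d distinct 2-dimensional linear subspaces of ℂ³ (lines in ℙ²(ℂ)) with d ≥ 2, and assume every 1-dimensional linear subspace of ℂ³ is contained in at most d − 2 members of L. For m ≥ 2 let ν_m be the (finite) number of 1-dimensional subspaces contained in exactly m members of L, and set χ1 = 3 − 2d + Σ_m (m−1)·ν_m, χ2 = 2d − Σ_m m·ν_m, Z(s) = (1/(ds+3))·(χ1 + χ2/(s+1) + Σ_m (2 − m + m/(s+1))·ν_m/(ms+2)) ∈ ℚ(s). Then Z has a pole at s = −3/d. (Proposition 1.8: for an indecomposable essential reduced central hyperplane arrangement in ℂ³ of degree d, −3/d is a pole of the topological local zeta function at the origin.) -/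

import Mathlib

open Polynomial Module

/-- The order of a rational function `Z ∈ ℚ(s)` at a point `α ∈ ℚ`: the integer `k`
such that `Z = (s-α)^k · (u/v)` with `u`, `v` not vanishing at `α`. -/
noncomputable def orderAt (Z : RatFunc ℚ) (α : ℚ) : ℤ :=
  (rootMultiplicity α Z.num : ℤ) - (rootMultiplicity α Z.denom : ℤ)

section AuxLemmas

lemma pole_of_rep (Z : RatFunc ℚ) (α : ℚ) (W g : Polynomial ℚ)
    (hg : g.eval α = 0) (hW : W.eval α ≠ 0)
    (hid : Z * algebraMap (Polynomial ℚ) (RatFunc ℚ) g = algebraMap (Polynomial ℚ) (RatFunc ℚ) W) :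
    (rootMultiplicity α Z.num : ℤ) - (rootMultiplicity α Z.denom : ℤ) < 0 := by
  have hinj := IsFractionRing.injective (Polynomial ℚ) (RatFunc ℚ)
  have hdne : algebraMap (Polynomial ℚ) (RatFunc ℚ) Z.denom ≠ 0 := by
    simpa using (fun h => Z.denom_ne_zero (hinj (by simpa using h)))
  have hpoly : Z.num * g = Z.denom * W := by
    apply hinj
    rw [map_mul, map_mul]
    have h1 : algebraMap (Polynomial ℚ) (RatFunc ℚ) Z.num =
        Z * algebraMap (Polynomial ℚ) (RatFunc ℚ) Z.denom := by
      rw [← div_eq_iff hdne]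
      exact RatFunc.num_div_denom Z
    rw [h1, ← hid]; ring
  have heval : Z.denom.eval α = 0 := by
    have := congrArg (Polynomial.eval α) hpoly
    simp only [eval_mul, hg, mul_zero] at this
    rcases mul_eq_zero.mp this.symm with h | h
    · exact h
    · exact absurd h hW
  have hnum : Z.num.eval α ≠ 0 := by
    intro h0
    obtain ⟨u, v, huv⟩ := Z.isCoprime_num_denom
    have := congrArg (Polynomial.eval α) huv
    simp [h0, heval] at this
  have h1 : rootMultiplicity α Z.num = 0 := rootMultiplicity_eq_zero (by simpa [IsRoot] using hnum)
  have h2 : 0 < rootMultiplicity α Z.denom :=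
    (rootMultiplicity_pos Z.denom_ne_zero).mpr (by simpa [IsRoot] using heval)
  omega

variable {ℓ₁ ℓ₂ p q : Submodule ℂ (Fin 3 → ℂ)}

lemma finrank_amb : finrank ℂ (Fin 3 → ℂ) = 3 := Module.finrank_fin_fun ℂ

lemma inf_rank_one (h1 : finrank ℂ ℓ₁ = 2) (h2 : finrank ℂ ℓ₂ = 2) (hne : ℓ₁ ≠ ℓ₂) :
    finrank ℂ ↥(ℓ₁ ⊓ ℓ₂) = 1 := by
  have hsum := Submodule.finrank_sup_add_finrank_inf_eq ℓ₁ ℓ₂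
  have hlt : ℓ₁ < ℓ₁ ⊔ ℓ₂ := by
    rcases lt_or_eq_of_le (le_sup_left : ℓ₁ ≤ ℓ₁ ⊔ ℓ₂) with h | h
    · exact h
    · exfalso
      exact hne (Submodule.eq_of_le_of_finrank_le (le_sup_right.trans h.symm.le) (by omega)).symm
  have h3 : finrank ℂ ↥(ℓ₁ ⊔ ℓ₂) ≤ 3 := by
    have := Submodule.finrank_le (ℓ₁ ⊔ ℓ₂)
    rwa [finrank_amb] at this
  have h4 : finrank ℂ ℓ₁ < finrank ℂ ↥(ℓ₁ ⊔ ℓ₂) := Submodule.finrank_lt_finrank_of_lt hlt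
  omega

lemma sup_rank_two (h1 : finrank ℂ p = 1) (h2 : finrank ℂ q = 1) (hne : p ≠ q) :
    finrank ℂ ↥(p ⊔ q) = 2 := by
  have hsum := Submodule.finrank_sup_add_finrank_inf_eq p q
  have hlt : p < p ⊔ q := by
    rcases lt_or_eq_of_le (le_sup_left : p ≤ p ⊔ q) with h | h
    · exact h
    · exact absurd (Submodule.eq_of_le_of_finrank_le (le_sup_right.trans h.symm.le) (by omega)).symm hne
  have h4 : finrank ℂ p < finrank ℂ ↥(p ⊔ q) := Submodule.finrank_lt_finrank_of_lt hlt
  have h5 : finrank ℂ ↥(p ⊓ q) ≤ finrank ℂ p := Submodule.finrank_mono inf_le_left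
  omega

lemma inf_eq_iff (h1 : finrank ℂ ℓ₁ = 2) (h2 : finrank ℂ ℓ₂ = 2) (hne : ℓ₁ ≠ ℓ₂)
    (hp : finrank ℂ p = 1) : ℓ₁ ⊓ ℓ₂ = p ↔ p ≤ ℓ₁ ∧ p ≤ ℓ₂ := by
  constructor
  · rintro rfl; exact ⟨inf_le_left, inf_le_right⟩
  · rintro ⟨ha, hb⟩
    have := inf_rank_one h1 h2 hne
    exact (Submodule.eq_of_le_of_finrank_le (le_inf ha hb) (by omega)).symm

lemma combo (L : Finset (Submodule ℂ (Fin 3 → ℂ)))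
    (d : ℕ) (hdcard : d = L.card) (hd2 : 2 ≤ d)
    (hL : ∀ ℓ ∈ L, finrank ℂ ℓ = 2)
    (hind : ∀ p : Submodule ℂ (Fin 3 → ℂ), finrank ℂ p = 1 →
      {ℓ : Submodule ℂ (Fin 3 → ℂ) | ℓ ∈ L ∧ p ≤ ℓ}.ncard ≤ d - 2)
    (ν : ℕ → ℕ)
    (hν : ∀ m, 2 ≤ m → ν m =
      {p : Submodule ℂ (Fin 3 → ℂ) | finrank ℂ p = 1 ∧
        {ℓ : Submodule ℂ (Fin 3 → ℂ) | ℓ ∈ L ∧ p ≤ ℓ}.ncard = m}.ncard) :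
    4 ≤ d ∧
    ((∑ m ∈ Finset.Icc 2 d, m * m * ν m) + d = d * d + ∑ m ∈ Finset.Icc 2 d, m * ν m) ∧
    (∀ m, 2 ≤ m → ν m ≠ 0 → m ≤ d - 2) ∧
    (∀ k, 2 ≤ k → ν k ≠ 0 → 2 * d < 3 * k →
      ν k = 1 ∧ ∀ m, 2 ≤ m → ν m ≠ 0 → m ≠ k → m + k ≤ d + 1) := by
  classical
  set mult : Submodule ℂ (Fin 3 → ℂ) → ℕ :=
    fun p => (L.filter (fun ℓ => p ≤ ℓ)).card with hmultdef
  have hnc : ∀ p : Submodule ℂ (Fin 3 → ℂ),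
      {ℓ : Submodule ℂ (Fin 3 → ℂ) | ℓ ∈ L ∧ p ≤ ℓ}.ncard = mult p := by
    intro p
    have : {ℓ : Submodule ℂ (Fin 3 → ℂ) | ℓ ∈ L ∧ p ≤ ℓ} =
        ↑(L.filter (fun ℓ => p ≤ ℓ)) := by ext ℓ; simp
    rw [this, Set.ncard_coe_finset]
  have hind' : ∀ p : Submodule ℂ (Fin 3 → ℂ), finrank ℂ p = 1 → mult p ≤ d - 2 :=
    fun p h => hnc p ▸ hind p h
  have hν' : ∀ m, 2 ≤ m → ν m =
      {p : Submodule ℂ (Fin 3 → ℂ) | finrank ℂ p = 1 ∧ mult p = m}.ncard := by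
    intro m hm; rw [hν m hm]; congr 1; ext p; simp [hnc]
  have hmult_le : ∀ p, mult p ≤ d := fun p => hdcard ▸ Finset.card_filter_le _ _
  obtain ⟨a, ha, b, hb, hab⟩ := Finset.one_lt_card.mp (by omega : 1 < L.card)
  have hpab : finrank ℂ ↥(a ⊓ b) = 1 := inf_rank_one (hL a ha) (hL b hb) hab
  have hmab : 2 ≤ mult (a ⊓ b) := by
    apply Finset.one_lt_card.mpr
    exact ⟨a, Finset.mem_filter.mpr ⟨ha, inf_le_left⟩, b,
      Finset.mem_filter.mpr ⟨hb, inf_le_right⟩, hab⟩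
  have hd4 : 4 ≤ d := by have := hind' _ hpab; omega
  set PFin : Finset (Submodule ℂ (Fin 3 → ℂ)) :=
    L.offDiag.image (fun q => q.1 ⊓ q.2) with hPdef
  have hPrank : ∀ p ∈ PFin, finrank ℂ p = 1 := by
    intro p hp
    obtain ⟨q, hq, rfl⟩ := Finset.mem_image.mp hp
    obtain ⟨h1, h2, h3⟩ := Finset.mem_offDiag.mp hq
    exact inf_rank_one (hL _ h1) (hL _ h2) h3
  have hPchar : ∀ p : Submodule ℂ (Fin 3 → ℂ), finrank ℂ p = 1 →
      (p ∈ PFin ↔ 2 ≤ mult p) := by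
    intro p hp
    constructor
    · intro hmem
      obtain ⟨q, hq, rfl⟩ := Finset.mem_image.mp hmem
      obtain ⟨h1, h2, h3⟩ := Finset.mem_offDiag.mp hq
      apply Finset.one_lt_card.mpr
      exact ⟨q.1, Finset.mem_filter.mpr ⟨h1, inf_le_left⟩, q.2,
        Finset.mem_filter.mpr ⟨h2, inf_le_right⟩, h3⟩
    · intro hmem
      obtain ⟨x, hx, y, hy, hxy⟩ := Finset.one_lt_card.mp hmem
      obtain ⟨hx1, hx2⟩ := Finset.mem_filter.mp hx
      obtain ⟨hy1, hy2⟩ := Finset.mem_filter.mp hy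
      refine Finset.mem_image.mpr ⟨(x, y), Finset.mem_offDiag.mpr ⟨hx1, hy1, hxy⟩, ?_⟩
      exact (inf_eq_iff (hL _ hx1) (hL _ hy1) hxy hp).mpr ⟨hx2, hy2⟩
  have hνcard : ∀ m, 2 ≤ m → ν m = (PFin.filter (fun p => mult p = m)).card := by
    intro m hm
    rw [hν' m hm]
    have : {p : Submodule ℂ (Fin 3 → ℂ) | finrank ℂ p = 1 ∧ mult p = m} =
        ↑(PFin.filter (fun p => mult p = m)) := by
      ext p
      simp only [Set.mem_setOf_eq, Finset.coe_filter, Finset.mem_coe]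
      constructor
      · rintro ⟨h1, h2⟩
        exact Set.mem_setOf_eq ▸ ⟨(hPchar p h1).mpr (h2 ▸ hm), h2⟩
      · rintro ⟨h1, h2⟩
        exact ⟨hPrank p h1, h2⟩
    rw [this, Set.ncard_coe_finset]
  have hfiber : ∀ p ∈ PFin,
      L.offDiag.filter (fun q => q.1 ⊓ q.2 = p) = (L.filter (fun ℓ => p ≤ ℓ)).offDiag := by
    intro p hp
    ext q
    constructor
    · intro hq
      obtain ⟨hqo, h4⟩ := Finset.mem_filter.mp hq
      obtain ⟨h1, h2, h3⟩ := Finset.mem_offDiag.mp hqo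
      obtain ⟨ha', hb'⟩ := (inf_eq_iff (hL _ h1) (hL _ h2) h3 (hPrank p hp)).mp h4
      exact Finset.mem_offDiag.mpr
        ⟨Finset.mem_filter.mpr ⟨h1, ha'⟩, Finset.mem_filter.mpr ⟨h2, hb'⟩, h3⟩
    · intro hq
      obtain ⟨h1, h2, h3⟩ := Finset.mem_offDiag.mp hq
      obtain ⟨h1L, ha'⟩ := Finset.mem_filter.mp h1
      obtain ⟨h2L, hb'⟩ := Finset.mem_filter.mp h2
      exact Finset.mem_filter.mpr ⟨Finset.mem_offDiag.mpr ⟨h1L, h2L, h3⟩,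
        (inf_eq_iff (hL _ h1L) (hL _ h2L) h3 (hPrank p hp)).mpr ⟨ha', hb'⟩⟩
  have hcount : d * d - d = ∑ p ∈ PFin, (mult p * mult p - mult p) := by
    have h1 : L.offDiag.card = d * d - d := by rw [Finset.offDiag_card, hdcard]
    have h2 := Finset.card_eq_sum_card_fiberwise
      (f := fun q : Submodule ℂ (Fin 3 → ℂ) × Submodule ℂ (Fin 3 → ℂ) => q.1 ⊓ q.2)
      (s := L.offDiag) (t := PFin) (fun q hq => Finset.mem_image_of_mem _ hq)
    rw [← h1, h2]
    apply Finset.sum_congr rfl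
    intro p hp
    rw [hfiber p hp, Finset.offDiag_card]
  have hgroup : ∑ p ∈ PFin, (mult p * mult p - mult p) =
      ∑ m ∈ Finset.Icc 2 d, (m * m - m) * ν m := by
    have hmap : ∀ p ∈ PFin, mult p ∈ Finset.Icc 2 d := fun p hp =>
      Finset.mem_Icc.mpr ⟨(hPchar p (hPrank p hp)).mp hp, hmult_le p⟩
    rw [← Finset.sum_fiberwise_of_maps_to hmap (fun p => mult p * mult p - mult p)]
    apply Finset.sum_congr rfl
    intro m hm
    have hm2 : 2 ≤ m := (Finset.mem_Icc.mp hm).1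
    rw [hνcard m hm2]
    rw [Finset.card_eq_sum_ones, Finset.mul_sum]
    apply Finset.sum_congr rfl
    intro p hp
    have := (Finset.mem_filter.mp hp).2
    simp [this]
  have hPI : ∑ m ∈ Finset.Icc 2 d, (m * m - m) * ν m = d * d - d := by
    rw [← hgroup]; exact hcount.symm
  have hsum2 : ∀ p q : Submodule ℂ (Fin 3 → ℂ), finrank ℂ p = 1 → finrank ℂ q = 1 →
      p ≠ q → mult p + mult q ≤ d + 1 := by
    intro p q hp hq hpq
    have hint : (L.filter (fun ℓ => p ≤ ℓ)) ∩ (L.filter (fun ℓ => q ≤ ℓ)) ⊆ {p ⊔ q} := by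
      intro ℓ hℓ
      obtain ⟨h1, h2⟩ := Finset.mem_inter.mp hℓ
      obtain ⟨hℓL, hpℓ⟩ := Finset.mem_filter.mp h1
      obtain ⟨_, hqℓ⟩ := Finset.mem_filter.mp h2
      have hr := sup_rank_two hp hq hpq
      have : p ⊔ q = ℓ := Submodule.eq_of_le_of_finrank_le (sup_le hpℓ hqℓ)
        (by rw [hr, hL ℓ hℓL])
      simp [this.symm]
    have hintcard : ((L.filter (fun ℓ => p ≤ ℓ)) ∩ (L.filter (fun ℓ => q ≤ ℓ))).card ≤ 1 :=
      le_trans (Finset.card_le_card hint) (by simp)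
    have huni : ((L.filter (fun ℓ => p ≤ ℓ)) ∪ (L.filter (fun ℓ => q ≤ ℓ))).card ≤ d := by
      rw [hdcard]
      apply Finset.card_le_card
      intro x hx
      rcases Finset.mem_union.mp hx with h | h
      · exact (Finset.mem_filter.mp h).1
      · exact (Finset.mem_filter.mp h).1
    have := Finset.card_union_add_card_inter
      (L.filter (fun ℓ => p ≤ ℓ)) (L.filter (fun ℓ => q ≤ ℓ))
    have e1 : mult p = (L.filter (fun ℓ => p ≤ ℓ)).card := rfl
    have e2 : mult q = (L.filter (fun ℓ => q ≤ ℓ)).card := rfl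
    omega
  refine ⟨hd4, ?_, ?_, ?_⟩
  · -- subtraction-free pair identity
    have hterm : ∀ m ∈ Finset.Icc 2 d, (m * m - m) * ν m + m * ν m = m * m * ν m := by
      intro m hm
      have hm2 : 2 ≤ m := (Finset.mem_Icc.mp hm).1
      have h1 : m ≤ m * m := Nat.le_mul_of_pos_left m (by omega)
      rw [Nat.sub_mul, Nat.sub_add_cancel (Nat.mul_le_mul_right (ν m) h1)]
    have hsplit : ∑ m ∈ Finset.Icc 2 d, m * m * ν m =
        (∑ m ∈ Finset.Icc 2 d, (m * m - m) * ν m) + ∑ m ∈ Finset.Icc 2 d, m * ν m := by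
      rw [← Finset.sum_add_distrib]
      exact (Finset.sum_congr rfl hterm).symm
    have hdd : d ≤ d * d := Nat.le_mul_of_pos_left d (by omega)
    rw [hsplit, hPI]
    omega
  · intro m hm hne
    obtain ⟨p, hp1, hp2⟩ := Set.nonempty_of_ncard_ne_zero (by rw [← hν' m hm]; exact hne)
    exact hp2 ▸ hind' p hp1
  · intro k hk hνk h2d3k
    obtain ⟨p, hp1, hp2⟩ := Set.nonempty_of_ncard_ne_zero (by rw [← hν' k hk]; exact hνk)
    have hkd2 : k ≤ d - 2 := hp2 ▸ hind' p hp1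
    constructor
    · rw [hν' k hk]
      have : {q : Submodule ℂ (Fin 3 → ℂ) | finrank ℂ q = 1 ∧ mult q = k} = {p} := by
        ext q
        simp only [Set.mem_setOf_eq, Set.mem_singleton_iff]
        constructor
        · rintro ⟨hq1, hq2⟩
          by_contra hqp
          have := hsum2 p q hp1 hq1 (fun h => hqp (h.symm))
          omega
        · rintro rfl; exact ⟨hp1, hp2⟩
      rw [this, Set.ncard_singleton]
    · intro m hm hνm hmk
      obtain ⟨q, hq1, hq2⟩ := Set.nonempty_of_ncard_ne_zero (by rw [← hν' m hm]; exact hνm)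
      have hqp : q ≠ p := by
        intro h; rw [h, hp2] at hq2; exact hmk hq2.symm
      have := hsum2 q p hq1 hp1 hqp
      omega

lemma zeta_rep (d : ℕ) (T : Finset ℕ) (ν : ℕ → ℕ) (χ1 χ2 : ℚ) (Z : RatFunc ℚ)
    (hZ : Z = 1 / ((d : RatFunc ℚ) * RatFunc.X + 3) *
      (RatFunc.C χ1 + RatFunc.C χ2 / (RatFunc.X + 1) +
        ∑ m ∈ T, ((2 : RatFunc ℚ) - (m : RatFunc ℚ) + (m : RatFunc ℚ) / (RatFunc.X + 1)) *
          (ν m : RatFunc ℚ) / ((m : RatFunc ℚ) * RatFunc.X + 2))) :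
    Z * algebraMap (Polynomial ℚ) (RatFunc ℚ)
        ((C (d : ℚ) * X + C 3) * (X + C 1) * ∏ m ∈ T, (C (m : ℚ) * X + C 2)) =
    algebraMap (Polynomial ℚ) (RatFunc ℚ)
        (C χ1 * (X + C 1) * ∏ m ∈ T, (C (m : ℚ) * X + C 2)
         + C χ2 * ∏ m ∈ T, (C (m : ℚ) * X + C 2)
         + ∑ m ∈ T, C ((ν m : ℚ)) * (C ((2 : ℚ) - (m : ℚ)) * (X + C 1) + C (m : ℚ)) *
             ∏ m' ∈ T.erase m, (C (m' : ℚ) * X + C 2)) := by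
  classical
  have hΦ : ∀ q : Polynomial ℚ, q.eval 0 ≠ 0 →
      algebraMap (Polynomial ℚ) (RatFunc ℚ) q ≠ 0 := fun q hq =>
    RatFunc.algebraMap_ne_zero (fun h => hq (by rw [h]; simp))
  have hu : algebraMap (Polynomial ℚ) (RatFunc ℚ) (C (d : ℚ) * X + C 3) =
      (d : RatFunc ℚ) * RatFunc.X + 3 := by
    simp [map_add, map_mul, RatFunc.algebraMap_C, RatFunc.algebraMap_X]
  have hv : algebraMap (Polynomial ℚ) (RatFunc ℚ) (X + C 1) = RatFunc.X + 1 := by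
    simp [map_add, RatFunc.algebraMap_C, RatFunc.algebraMap_X]
  have hq : ∀ m : ℕ, algebraMap (Polynomial ℚ) (RatFunc ℚ) (C (m : ℚ) * X + C 2) =
      (m : RatFunc ℚ) * RatFunc.X + 2 := by
    intro m
    simp [map_add, map_mul, RatFunc.algebraMap_C, RatFunc.algebraMap_X]
  have hune : ((d : RatFunc ℚ) * RatFunc.X + 3) ≠ 0 := by
    rw [← hu]; exact hΦ _ (by simp)
  have hvne : (RatFunc.X + 1 : RatFunc ℚ) ≠ 0 := by
    rw [← hv]; exact hΦ _ (by simp)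
  have hqne : ∀ m : ℕ, ((m : RatFunc ℚ) * RatFunc.X + 2) ≠ 0 := by
    intro m; rw [← hq]; exact hΦ _ (by simp)
  rw [hZ]
  simp only [map_mul, map_add, map_sum, map_prod, hu, hv, hq, RatFunc.algebraMap_C,
    RatFunc.algebraMap_X, map_sub, map_natCast, map_ofNat]
  have hstep : ∀ S P : RatFunc ℚ,
      (1 / ((d : RatFunc ℚ) * RatFunc.X + 3) * S) *
        (((d : RatFunc ℚ) * RatFunc.X + 3) * (RatFunc.X + 1) * P) =
      S * ((RatFunc.X + 1) * P) := by
    intro S P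
    field_simp
  rw [hstep]
  rw [add_mul, add_mul, Finset.sum_mul]
  congr 1
  · congr 1
    · ring
    · rw [div_mul_eq_mul_div, mul_comm (RatFunc.X + 1), ← mul_assoc, mul_div_assoc,
        div_self hvne, mul_one]
  · apply Finset.sum_congr rfl
    intro m hm
    rw [show ∏ m' ∈ T, ((m' : RatFunc ℚ) * RatFunc.X + 2) =
        ((m : RatFunc ℚ) * RatFunc.X + 2) *
          ∏ m' ∈ T.erase m, ((m' : RatFunc ℚ) * RatFunc.X + 2) from
      (Finset.mul_prod_erase T _ hm).symm]
    have h1 := hqne m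
    field_simp

end AuxLemmas

set_option maxHeartbeats 2000000 in
theorem statement5 (L : Finset (Submodule ℂ (Fin 3 → ℂ)))
    (d : ℕ) (hdcard : d = L.card) (hd2 : 2 ≤ d)
    (hL : ∀ ℓ ∈ L, finrank ℂ ℓ = 2)
    (hind : ∀ p : Submodule ℂ (Fin 3 → ℂ), finrank ℂ p = 1 →
      {ℓ : Submodule ℂ (Fin 3 → ℂ) | ℓ ∈ L ∧ p ≤ ℓ}.ncard ≤ d - 2)
    (ν : ℕ → ℕ)
    (hν : ∀ m, 2 ≤ m → ν m =
      {p : Submodule ℂ (Fin 3 → ℂ) | finrank ℂ p = 1 ∧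
        {ℓ : Submodule ℂ (Fin 3 → ℂ) | ℓ ∈ L ∧ p ≤ ℓ}.ncard = m}.ncard)
    (χ1 χ2 : ℚ)
    (hχ1 : χ1 = 3 - 2 * (d : ℚ) + ∑ m ∈ Finset.Icc 2 d, ((m : ℚ) - 1) * (ν m : ℚ))
    (hχ2 : χ2 = 2 * (d : ℚ) - ∑ m ∈ Finset.Icc 2 d, (m : ℚ) * (ν m : ℚ))
    (Z : RatFunc ℚ)
    (hZ : Z = 1 / ((d : RatFunc ℚ) * RatFunc.X + 3) *
      (RatFunc.C χ1 + RatFunc.C χ2 / (RatFunc.X + 1) +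
        ∑ m ∈ Finset.Icc 2 d,
          ((2 : RatFunc ℚ) - (m : RatFunc ℚ) + (m : RatFunc ℚ) / (RatFunc.X + 1)) *
            (ν m : RatFunc ℚ) / ((m : RatFunc ℚ) * RatFunc.X + 2))) :
    orderAt Z (-3 / (d : ℚ)) < 0 := by
  classical
  obtain ⟨hd4, hPN, hle, hheavy⟩ := combo L d hdcard hd2 hL hind ν hν
  have hD4 : (4 : ℚ) ≤ (d : ℚ) := by exact_mod_cast hd4
  have hD0 : (d : ℚ) ≠ 0 := by positivity
  set α : ℚ := -3 / (d : ℚ) with hα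
  set T : Finset ℕ := (Finset.Icc 2 d).filter (fun m => ν m ≠ 0) with hT
  have hTmem : ∀ m ∈ T, 2 ≤ m ∧ m ≤ d ∧ ν m ≠ 0 := by
    intro m hm
    obtain ⟨h1, h2⟩ := Finset.mem_filter.mp hm
    obtain ⟨h3, h4⟩ := Finset.mem_Icc.mp h1
    exact ⟨h3, h4, h2⟩
  have hTd2 : ∀ m ∈ T, m ≤ d - 2 := by
    intro m hm
    obtain ⟨h1, _, h3⟩ := hTmem m hm
    exact hle m h1 h3
  -- rewrite the defining sum over the support T
  have hZT : Z = 1 / ((d : RatFunc ℚ) * RatFunc.X + 3) *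
      (RatFunc.C χ1 + RatFunc.C χ2 / (RatFunc.X + 1) +
        ∑ m ∈ T,
          ((2 : RatFunc ℚ) - (m : RatFunc ℚ) + (m : RatFunc ℚ) / (RatFunc.X + 1)) *
            (ν m : RatFunc ℚ) / ((m : RatFunc ℚ) * RatFunc.X + 2)) := by
    rw [hZ, hT]
    congr 2
    rw [Finset.sum_filter_of_ne]
    intro m hm h0
    by_contra hc
    simp [hc] at h0
  -- the polynomials giving a fraction representation of Z
  set g : Polynomial ℚ := (C (d : ℚ) * X + C 3) * (X + C 1) * ∏ m ∈ T, (C (m : ℚ) * X + C 2)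
    with hgdef
  set W : Polynomial ℚ := C χ1 * (X + C 1) * ∏ m ∈ T, (C (m : ℚ) * X + C 2)
         + C χ2 * ∏ m ∈ T, (C (m : ℚ) * X + C 2)
         + ∑ m ∈ T, C ((ν m : ℚ)) * (C ((2 : ℚ) - (m : ℚ)) * (X + C 1) + C (m : ℚ)) *
             ∏ m' ∈ T.erase m, (C (m' : ℚ) * X + C 2) with hWdef
  have hrep := zeta_rep d T ν χ1 χ2 Z hZT
  -- evaluation of g at α vanishes
  have hdα : (d : ℚ) * α + 3 = 0 := by rw [hα]; field_simp; ring
  have hg0 : g.eval α = 0 := by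
    rw [hgdef]
    simp only [eval_mul, eval_add, eval_C, eval_X]
    rw [hdα]
    ring
  -- evaluation of W at α
  have hWα : W.eval α = χ1 * (α + 1) * (∏ m ∈ T, ((m : ℚ) * α + 2))
      + χ2 * (∏ m ∈ T, ((m : ℚ) * α + 2))
      + ∑ m ∈ T, (ν m : ℚ) * (((2 : ℚ) - (m : ℚ)) * (α + 1) + (m : ℚ)) *
          ∏ m' ∈ T.erase m, ((m' : ℚ) * α + 2) := by
    rw [hWdef]
    simp [eval_prod, eval_finset_sum, eval_mul, eval_add, eval_C, eval_X]
  -- basic cast facts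
  have hmQ : ∀ m ∈ T, (2 : ℚ) ≤ (m : ℚ) ∧ (m : ℚ) ≤ (d : ℚ) - 2 := by
    intro m hm
    obtain ⟨h1, h2, _⟩ := hTmem m hm
    have h3 := hTd2 m hm
    constructor
    · exact_mod_cast h1
    · have h5 : m + 2 ≤ d := by omega
      have h6 : (m : ℚ) + 2 ≤ (d : ℚ) := by exact_mod_cast h5
      linarith
  have hem : ∀ m : ℕ, (m : ℚ) * α + 2 = (2 * (d : ℚ) - 3 * (m : ℚ)) / (d : ℚ) := by
    intro m; rw [hα]; field_simp; ring
  have hamq : ∀ m ∈ T, ((2 : ℚ) - (m : ℚ)) * (α + 1) + (m : ℚ) ≠ 0 := by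
    intro m hm
    obtain ⟨hm2, hmd⟩ := hmQ m hm
    have key : (((2 : ℚ) - (m : ℚ)) * (α + 1) + (m : ℚ)) * (d : ℚ)
        = 2 * (d : ℚ) + 3 * (m : ℚ) - 6 := by
      rw [hα]; field_simp; ring
    intro h
    rw [h, zero_mul] at key
    nlinarith
  -- main dichotomy
  by_cases hc1 : ∃ k ∈ T, 3 * k = 2 * d
  · -- a point of multiplicity 2d/3 exists: the k-th factor survives
    obtain ⟨k, hkT, hk32⟩ := hc1
    have hek0 : (k : ℚ) * α + 2 = 0 := by
      rw [hem k]
      have h1 : 3 * (k : ℚ) = 2 * (d : ℚ) := by exact_mod_cast congrArg (Nat.cast (R := ℚ)) hk32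
      rw [show 2 * (d : ℚ) - 3 * (k : ℚ) = 0 by linarith]
      simp
    have hene : ∀ m ∈ T, m ≠ k → (m : ℚ) * α + 2 ≠ 0 := by
      intro m hm hmk h0
      rw [hem m] at h0
      rcases div_eq_zero_iff.mp h0 with h1 | h1
      · have h2 : 3 * m = 2 * d := by
          have h3 : (3 * m : ℚ) = (2 * d : ℚ) := by push_cast; linarith
          exact_mod_cast h3
        omega
      · exact hD0 h1
    have hprod0 : (∏ m ∈ T, ((m : ℚ) * α + 2)) = 0 :=
      Finset.prod_eq_zero hkT hek0
    have hsum1 : ∑ m ∈ T, (ν m : ℚ) * (((2 : ℚ) - (m : ℚ)) * (α + 1) + (m : ℚ)) *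
          ∏ m' ∈ T.erase m, ((m' : ℚ) * α + 2)
        = (ν k : ℚ) * (((2 : ℚ) - (k : ℚ)) * (α + 1) + (k : ℚ)) *
          ∏ m' ∈ T.erase k, ((m' : ℚ) * α + 2) := by
      apply Finset.sum_eq_single_of_mem k hkT
      intro m hm hmk
      have : (∏ m' ∈ T.erase m, ((m' : ℚ) * α + 2)) = 0 :=
        Finset.prod_eq_zero (Finset.mem_erase.mpr ⟨fun h => hmk h.symm, hkT⟩) hek0
      rw [this, mul_zero]
    have hW0 : W.eval α ≠ 0 := by
      rw [hWα, hprod0, hsum1]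
      simp only [mul_zero, zero_add]
      apply mul_ne_zero
      apply mul_ne_zero
      · exact_mod_cast (hTmem k hkT).2.2
      · exact hamq k hkT
      · apply Finset.prod_ne_zero_iff.mpr
        intro m hm
        obtain ⟨hmk, hmT⟩ := Finset.mem_erase.mp hm
        exact hene m hmT hmk
    unfold orderAt
    exact pole_of_rep Z α W g hg0 hW0 hrep
  · -- no factor vanishes; compute the bracket
    push_neg at hc1
    have hene : ∀ m ∈ T, (m : ℚ) * α + 2 ≠ 0 := by
      intro m hm h0
      rw [hem m] at h0
      rcases div_eq_zero_iff.mp h0 with h1 | h1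
      · apply hc1 m hm
        have h3 : (3 * m : ℚ) = (2 * d : ℚ) := by push_cast; linarith
        exact_mod_cast h3
      · exact hD0 h1
    have h23ne : ∀ m ∈ T, 2 * (d : ℚ) - 3 * (m : ℚ) ≠ 0 := by
      intro m hm h0
      exact hene m hm (by rw [hem m, h0]; simp)
    set E : ℚ := ∏ m ∈ T, ((m : ℚ) * α + 2) with hEdef
    have hEne : E ≠ 0 := Finset.prod_ne_zero_iff.mpr hene
    set B : ℚ := χ1 * (α + 1) + χ2 +
        ∑ m ∈ T, (ν m : ℚ) * (((2 : ℚ) - (m : ℚ)) * (α + 1) + (m : ℚ)) / ((m : ℚ) * α + 2)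
      with hBdef
    have hWB : W.eval α = E * B := by
      rw [hWα, hBdef]
      rw [mul_add, mul_add, Finset.mul_sum]
      congr 1
      · congr 1 <;> ring
      · apply Finset.sum_congr rfl
        intro m hm
        rw [show E = ((m : ℚ) * α + 2) * ∏ m' ∈ T.erase m, ((m' : ℚ) * α + 2) from
          (Finset.mul_prod_erase T _ hm).symm]
        have := hene m hm
        field_simp
    -- χ sums over the support
    have hχ1T : χ1 = 3 - 2 * (d : ℚ) + ∑ m ∈ T, ((m : ℚ) - 1) * (ν m : ℚ) := by
      rw [hχ1, hT]
      congr 1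
      rw [Finset.sum_filter_of_ne]
      intro m hm h0
      by_contra hc
      simp [hc] at h0
    have hχ2T : χ2 = 2 * (d : ℚ) - ∑ m ∈ T, (m : ℚ) * (ν m : ℚ) := by
      rw [hχ2, hT]
      congr 1
      rw [Finset.sum_filter_of_ne]
      intro m hm h0
      by_contra hc
      simp [hc] at h0
    -- pair identity over the support, in ℚ
    have hPNT : (∑ m ∈ T, (m : ℚ) * (m : ℚ) * (ν m : ℚ)) + (d : ℚ) =
        (d : ℚ) * (d : ℚ) + ∑ m ∈ T, (m : ℚ) * (ν m : ℚ) := by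
      have h1 : ∑ m ∈ T, m * m * ν m = ∑ m ∈ Finset.Icc 2 d, m * m * ν m := by
        rw [hT]; apply Finset.sum_filter_of_ne
        intro m hm h0
        by_contra hc
        simp [hc] at h0
      have h2 : ∑ m ∈ T, m * ν m = ∑ m ∈ Finset.Icc 2 d, m * ν m := by
        rw [hT]; apply Finset.sum_filter_of_ne
        intro m hm h0
        by_contra hc
        simp [hc] at h0
      have h3 : (∑ m ∈ T, m * m * ν m) + d = d * d + ∑ m ∈ T, m * ν m := by
        rw [h1, h2]; exact hPN
      exact_mod_cast h3
    have hPIQ : ∑ m ∈ T, (ν m : ℚ) * (m : ℚ) * ((m : ℚ) - 1) = (d : ℚ) * (d : ℚ) - (d : ℚ) := by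
      have h1 : ∑ m ∈ T, (ν m : ℚ) * (m : ℚ) * ((m : ℚ) - 1) =
          (∑ m ∈ T, (m : ℚ) * (m : ℚ) * (ν m : ℚ)) - ∑ m ∈ T, (m : ℚ) * (ν m : ℚ) := by
        rw [← Finset.sum_sub_distrib]
        apply Finset.sum_congr rfl
        intro m hm
        ring
      rw [h1]
      linarith [hPNT]
    -- rewrite B as a single weighted sum
    have hsplitterm : ∀ m ∈ T,
        (ν m : ℚ) * (((2 : ℚ) - (m : ℚ)) * (α + 1) + (m : ℚ)) / ((m : ℚ) * α + 2)
        = (ν m : ℚ) * (9 * (m : ℚ) * ((m : ℚ) - 1) / ((d : ℚ) * (2 * (d : ℚ) - 3 * (m : ℚ))))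
          + (ν m : ℚ) * ((m : ℚ) + (1 - (m : ℚ)) * (α + 1)) := by
      intro m hm
      have h1 := h23ne m hm
      have h1' : 2 * (d : ℚ) - (m : ℚ) * 3 ≠ 0 := by rw [mul_comm (m : ℚ)]; exact h1
      rw [hem m, hα]
      field_simp
      ring
    have hsum1 : ∑ m ∈ T,
        (ν m : ℚ) * (((2 : ℚ) - (m : ℚ)) * (α + 1) + (m : ℚ)) / ((m : ℚ) * α + 2)
        = (∑ m ∈ T, (ν m : ℚ) *
            (9 * (m : ℚ) * ((m : ℚ) - 1) / ((d : ℚ) * (2 * (d : ℚ) - 3 * (m : ℚ)))))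
          + ∑ m ∈ T, (ν m : ℚ) * ((m : ℚ) + (1 - (m : ℚ)) * (α + 1)) := by
      rw [← Finset.sum_add_distrib]
      exact Finset.sum_congr rfl hsplitterm
    have hχsum : χ1 * (α + 1) + χ2 +
        (∑ m ∈ T, (ν m : ℚ) * ((m : ℚ) + (1 - (m : ℚ)) * (α + 1)))
        = 9 * ((d : ℚ) - 1) / (d : ℚ) := by
      have e0 : ∑ m ∈ T, (((m : ℚ) - 1) * (ν m : ℚ) * (α + 1) - (m : ℚ) * (ν m : ℚ)
          + (ν m : ℚ) * ((m : ℚ) + (1 - (m : ℚ)) * (α + 1))) = 0 :=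
        Finset.sum_eq_zero (fun m hm => by ring)
      rw [Finset.sum_add_distrib, Finset.sum_sub_distrib] at e0
      have e1 : (∑ m ∈ T, ((m : ℚ) - 1) * (ν m : ℚ)) * (α + 1) =
          ∑ m ∈ T, ((m : ℚ) - 1) * (ν m : ℚ) * (α + 1) := by rw [Finset.sum_mul]
      have hfin : (3 - 2 * (d : ℚ)) * (α + 1) + 2 * (d : ℚ) = 9 * ((d : ℚ) - 1) / (d : ℚ) := by
        rw [hα]; field_simp; ring
      rw [hχ1T, hχ2T]
      linear_combination hfin + e0 + e1
    have hB9 : B = 9 * ((d : ℚ) - 1) / (d : ℚ) +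
        ∑ m ∈ T, (ν m : ℚ) *
          (9 * (m : ℚ) * ((m : ℚ) - 1) / ((d : ℚ) * (2 * (d : ℚ) - 3 * (m : ℚ)))) := by
      rw [hBdef]
      linear_combination hsum1 + hχsum
    set w : ℕ → ℚ := fun m =>
      27 * (m : ℚ) * ((m : ℚ) - 1) * ((d : ℚ) - (m : ℚ)) /
        ((d : ℚ) ^ 2 * (2 * (d : ℚ) - 3 * (m : ℚ))) with hwdef
    have hBS : B = ∑ m ∈ T, (ν m : ℚ) * w m := by
      rw [hB9]
      have e2 : 9 * ((d : ℚ) - 1) / (d : ℚ) =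
          ∑ m ∈ T, (ν m : ℚ) * (9 * (m : ℚ) * ((m : ℚ) - 1) / (d : ℚ) ^ 2) := by
        have e3 : ∑ m ∈ T, (ν m : ℚ) * (9 * (m : ℚ) * ((m : ℚ) - 1) / (d : ℚ) ^ 2) =
            (9 / (d : ℚ) ^ 2) * ∑ m ∈ T, (ν m : ℚ) * (m : ℚ) * ((m : ℚ) - 1) := by
          rw [Finset.mul_sum]
          exact Finset.sum_congr rfl (fun m hm => by ring)
        rw [e3, hPIQ]
        field_simp
      rw [e2, ← Finset.sum_add_distrib]
      apply Finset.sum_congr rfl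
      intro m hm
      have h1 := h23ne m hm
      have h1' : (d : ℚ) * 2 - (m : ℚ) * 3 ≠ 0 := by rw [mul_comm (m : ℚ), mul_comm (d : ℚ)]; exact h1
      simp only [hwdef]
      field_simp
      ring
    -- now show B ≠ 0 by a sign argument
    have hW0 : W.eval α ≠ 0 := by
      rw [hWB]
      apply mul_ne_zero hEne
      by_cases hc2 : ∃ k ∈ T, 2 * d < 3 * k
      · -- heavy point: B < 0
        obtain ⟨k, hkT, hk⟩ := hc2
        obtain ⟨hk2, hkd, hνk⟩ := hTmem k hkT
        have hkd2 : k ≤ d - 2 := hTd2 k hkT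
        obtain ⟨hνk1, hother⟩ := hheavy k hk2 hνk hk
        have hKQ : (2 : ℚ) ≤ (k : ℚ) ∧ (k : ℚ) ≤ (d : ℚ) - 2 := hmQ k hkT
        have h3K : 2 * (d : ℚ) + 1 ≤ 3 * (k : ℚ) := by
          have h4 : 2 * d + 1 ≤ 3 * k := by omega
          exact_mod_cast h4
        have hden1 : 0 < 3 * (k : ℚ) - 2 * (d : ℚ) := by linarith
        have hden2 : 0 < 3 * (k : ℚ) - (d : ℚ) - 3 := by linarith
        set c : ℚ := 27 * ((d : ℚ) - 2) / ((d : ℚ) ^ 2 * (3 * (k : ℚ) - (d : ℚ) - 3)) with hcdef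
        have hbound : ∀ m ∈ T.erase k,
            (ν m : ℚ) * w m ≤ ((ν m : ℚ) * (m : ℚ) * ((m : ℚ) - 1)) * c := by
          intro m hm
          obtain ⟨hmk, hmT⟩ := Finset.mem_erase.mp hm
          obtain ⟨hm2, hmd, hνm⟩ := hTmem m hmT
          have hmk1 : m + k ≤ d + 1 := hother m hm2 hνm hmk
          have hmQ2 := hmQ m hmT
          have hmkQ : (m : ℚ) + (k : ℚ) ≤ (d : ℚ) + 1 := by exact_mod_cast hmk1
          have h2d3m : 3 * (k : ℚ) - (d : ℚ) - 3 ≤ 2 * (d : ℚ) - 3 * (m : ℚ) := by linarith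
          have hpos3 : 0 < 2 * (d : ℚ) - 3 * (m : ℚ) := by linarith
          have key : ((ν m : ℚ) * (m : ℚ) * ((m : ℚ) - 1)) * c - (ν m : ℚ) * w m
              = (ν m : ℚ) * 27 * (m : ℚ) * ((m : ℚ) - 1) *
                (((d : ℚ) - 2) * (2 * (d : ℚ) - 3 * (m : ℚ))
                  - ((d : ℚ) - (m : ℚ)) * (3 * (k : ℚ) - (d : ℚ) - 3)) /
                ((d : ℚ) ^ 2 * (2 * (d : ℚ) - 3 * (m : ℚ)) * (3 * (k : ℚ) - (d : ℚ) - 3)) := by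
            have hn1 : (d : ℚ) * 2 - (m : ℚ) * 3 ≠ 0 := ne_of_gt (by linarith)
            have hn2 : (k : ℚ) * 3 - (d : ℚ) - 3 ≠ 0 := ne_of_gt (by linarith)
            have hn3 : 3 * (k : ℚ) - (d : ℚ) - 3 ≠ 0 := ne_of_gt (by linarith)
            simp only [hcdef, hwdef]
            field_simp
          have hnum : 0 ≤ ((d : ℚ) - 2) * (2 * (d : ℚ) - 3 * (m : ℚ))
              - ((d : ℚ) - (m : ℚ)) * (3 * (k : ℚ) - (d : ℚ) - 3) := by
            have h1 : ((d : ℚ) - (m : ℚ)) * (3 * (k : ℚ) - (d : ℚ) - 3)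
                ≤ ((d : ℚ) - 2) * (2 * (d : ℚ) - 3 * (m : ℚ)) := by
              apply mul_le_mul (by linarith [hmQ2.1, hmQ2.2]) h2d3m (le_of_lt hden2)
                (by linarith)
            linarith
          have hterm0 : 0 ≤ (ν m : ℚ) * 27 * (m : ℚ) * ((m : ℚ) - 1) := by
            have hν0 : (0 : ℚ) ≤ (ν m : ℚ) := Nat.cast_nonneg _
            have h27 : (0 : ℚ) ≤ (ν m : ℚ) * 27 := by linarith
            have hm0 : (0 : ℚ) ≤ (m : ℚ) := by linarith [hmQ2.1]
            have hm1 : (0 : ℚ) ≤ (m : ℚ) - 1 := by linarith [hmQ2.1]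
            exact mul_nonneg (mul_nonneg h27 hm0) hm1
          have hfin : 0 ≤ ((ν m : ℚ) * (m : ℚ) * ((m : ℚ) - 1)) * c - (ν m : ℚ) * w m := by
            rw [key]
            apply div_nonneg
            · exact mul_nonneg hterm0 hnum
            · positivity
          linarith
        have hsum_erase : ∑ m ∈ T.erase k, (ν m : ℚ) * (m : ℚ) * ((m : ℚ) - 1)
            = ((d : ℚ) * (d : ℚ) - (d : ℚ)) - (k : ℚ) * ((k : ℚ) - 1) := by
          have hh := Finset.add_sum_erase T (fun m => (ν m : ℚ) * (m : ℚ) * ((m : ℚ) - 1)) hkT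
          rw [hPIQ] at hh
          have hνk1Q : ((ν k : ℕ) : ℚ) = 1 := by exact_mod_cast hνk1
          simp only [hνk1Q, one_mul] at hh
          linarith
        have hBsplit : B = (ν k : ℚ) * w k + ∑ m ∈ T.erase k, (ν m : ℚ) * w m := by
          rw [hBS]
          exact (Finset.add_sum_erase T (fun m => (ν m : ℚ) * w m) hkT).symm
        have hsum_le : ∑ m ∈ T.erase k, (ν m : ℚ) * w m
            ≤ (((d : ℚ) * (d : ℚ) - (d : ℚ)) - (k : ℚ) * ((k : ℚ) - 1)) * c := by
          calc ∑ m ∈ T.erase k, (ν m : ℚ) * w m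
              ≤ ∑ m ∈ T.erase k, ((ν m : ℚ) * (m : ℚ) * ((m : ℚ) - 1)) * c :=
                Finset.sum_le_sum hbound
            _ = (((d : ℚ) * (d : ℚ) - (d : ℚ)) - (k : ℚ) * ((k : ℚ) - 1)) * c := by
                rw [← Finset.sum_mul, hsum_erase]
        have hF : ((d : ℚ) + (k : ℚ) - 1) * ((d : ℚ) - 2) * (3 * (k : ℚ) - 2 * (d : ℚ))
            < (k : ℚ) * ((k : ℚ) - 1) * (3 * (k : ℚ) - (d : ℚ) - 3) := by
          have ht : 1 ≤ 3 * (k : ℚ) - 2 * (d : ℚ) := by linarith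
          have hu : 0 ≤ 3 * (d : ℚ) - 3 * (k : ℚ) - 6 := by linarith [hKQ.2]
          nlinarith [mul_nonneg hu hu, mul_nonneg (mul_nonneg hu hu) hu,
            mul_nonneg (by linarith : (0:ℚ) ≤ 3 * (k : ℚ) - 2 * (d : ℚ)) hu,
            mul_nonneg (mul_nonneg (by linarith : (0:ℚ) ≤ 3 * (k : ℚ) - 2 * (d : ℚ)) hu) hu]
        have hwk : (ν k : ℚ) * w k
              + (((d : ℚ) * (d : ℚ) - (d : ℚ)) - (k : ℚ) * ((k : ℚ) - 1)) * c
            = 27 * ((d : ℚ) - (k : ℚ)) *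
                (((d : ℚ) + (k : ℚ) - 1) * ((d : ℚ) - 2) * (3 * (k : ℚ) - 2 * (d : ℚ))
                  - (k : ℚ) * ((k : ℚ) - 1) * (3 * (k : ℚ) - (d : ℚ) - 3)) /
              ((d : ℚ) ^ 2 * (3 * (k : ℚ) - 2 * (d : ℚ)) * (3 * (k : ℚ) - (d : ℚ) - 3)) := by
          have hνk1Q : ((ν k : ℕ) : ℚ) = 1 := by exact_mod_cast hνk1
          simp only [hwdef, hcdef, hνk1Q]
          have h1 : 2 * (d : ℚ) - 3 * (k : ℚ) ≠ 0 := by linarith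
          have hn1 : (d : ℚ) * 2 - (k : ℚ) * 3 ≠ 0 := ne_of_lt (by linarith)
          have hn4 : (k : ℚ) * 3 - (d : ℚ) * 2 ≠ 0 := ne_of_gt (by linarith)
          have hn2 : (k : ℚ) * 3 - (d : ℚ) - 3 ≠ 0 := ne_of_gt (by linarith)
          have hn3 : 3 * (k : ℚ) - (d : ℚ) - 3 ≠ 0 := ne_of_gt (by linarith)
          field_simp
          ring
        have hneg : (ν k : ℚ) * w k
            + (((d : ℚ) * (d : ℚ) - (d : ℚ)) - (k : ℚ) * ((k : ℚ) - 1)) * c < 0 := by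
          rw [hwk]
          apply div_neg_of_neg_of_pos
          · have h1 : 0 < 27 * ((d : ℚ) - (k : ℚ)) := by linarith [hKQ.2]
            have h2 : ((d : ℚ) + (k : ℚ) - 1) * ((d : ℚ) - 2) * (3 * (k : ℚ) - 2 * (d : ℚ))
                - (k : ℚ) * ((k : ℚ) - 1) * (3 * (k : ℚ) - (d : ℚ) - 3) < 0 := by linarith
            exact mul_neg_of_pos_of_neg h1 h2
          · positivity
        have hBneg : B < 0 := by
          rw [hBsplit]
          linarith
        exact ne_of_lt hBneg
      · -- all multiplicities light: B > 0
        push_neg at hc2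
        have hlow : ∀ m ∈ T, 27 / (d : ℚ) ^ 3 * ((ν m : ℚ) * (m : ℚ) * ((m : ℚ) - 1))
            ≤ (ν m : ℚ) * w m := by
          intro m hm
          obtain ⟨hm2, hmd, hνm⟩ := hTmem m hm
          obtain ⟨hmQ1, hmQ2⟩ := hmQ m hm
          have h3m : 3 * m ≤ 2 * d := hc2 m hm
          have h3m' : 3 * m ≠ 2 * d := fun h => hc1 m hm h
          have h3mQ : 3 * (m : ℚ) < 2 * (d : ℚ) := by
            have h4 : 3 * m < 2 * d := by omega
            exact_mod_cast h4
          have hpos3 : 0 < 2 * (d : ℚ) - 3 * (m : ℚ) := by linarith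
          have key : (ν m : ℚ) * w m - 27 / (d : ℚ) ^ 3 * ((ν m : ℚ) * (m : ℚ) * ((m : ℚ) - 1))
              = 27 * (ν m : ℚ) * (m : ℚ) * ((m : ℚ) - 1) *
                (((d : ℚ) - (m : ℚ)) * ((d : ℚ) - 3) + (d : ℚ)) /
                ((d : ℚ) ^ 3 * (2 * (d : ℚ) - 3 * (m : ℚ))) := by
            have hn1 : (d : ℚ) * 2 - (m : ℚ) * 3 ≠ 0 := ne_of_gt (by linarith)
            simp only [hwdef]
            field_simp
            ring
          have h0 : 0 ≤ 27 * (ν m : ℚ) * (m : ℚ) * ((m : ℚ) - 1) *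
              (((d : ℚ) - (m : ℚ)) * ((d : ℚ) - 3) + (d : ℚ)) := by
            have hν0 : (0 : ℚ) ≤ (ν m : ℚ) := Nat.cast_nonneg _
            have h1 : 0 ≤ ((d : ℚ) - (m : ℚ)) * ((d : ℚ) - 3) + (d : ℚ) := by nlinarith
            nlinarith [mul_nonneg (mul_nonneg hν0 (by linarith : (0:ℚ) ≤ (m : ℚ)))
              (by linarith : (0:ℚ) ≤ (m : ℚ) - 1)]
          have hfin : 0 ≤ (ν m : ℚ) * w m
              - 27 / (d : ℚ) ^ 3 * ((ν m : ℚ) * (m : ℚ) * ((m : ℚ) - 1)) := by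
            rw [key]
            apply div_nonneg h0
            positivity
          linarith
        have hBlow : 27 / (d : ℚ) ^ 3 * ((d : ℚ) * (d : ℚ) - (d : ℚ)) ≤ B := by
          rw [hBS]
          calc 27 / (d : ℚ) ^ 3 * ((d : ℚ) * (d : ℚ) - (d : ℚ))
              = ∑ m ∈ T, 27 / (d : ℚ) ^ 3 * ((ν m : ℚ) * (m : ℚ) * ((m : ℚ) - 1)) := by
                rw [← Finset.mul_sum, hPIQ]
            _ ≤ ∑ m ∈ T, (ν m : ℚ) * w m := Finset.sum_le_sum hlow
        have hBpos : 0 < B := by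
          have h1 : 0 < 27 / (d : ℚ) ^ 3 * ((d : ℚ) * (d : ℚ) - (d : ℚ)) := by
            have h2 : 0 < (d : ℚ) * (d : ℚ) - (d : ℚ) := by nlinarith
            have h3 : 0 < 27 / (d : ℚ) ^ 3 := by positivity
            exact mul_pos h3 h2
          exact lt_of_lt_of_le h1 hBlow
        exact (ne_of_lt hBpos).symm
    unfold orderAt
    exact pole_of_rep Z α W g hg0 hW0 hrep
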